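/- For any convex body K in R^n, the volume of the difference body satisfies |K - K| ≤ binom(2n, n) |K|. -/

import Mathlib

open MeasureTheory Set Pointwise
open scoped ENNReal Topology

lemma prod_range_nat_cast (n k : ℕ) :
    ∏ j ∈ Finset.range k, ((n:ℂ) + (j:ℂ)) = ((n.ascFactorial k : ℕ) : ℂ) := by
  induction k with
  | zero => simp
  | succ k ih => rw [Finset.prod_range_succ, ih, Nat.ascFactorial_succ]; push_cast; ring

lemma beta_nat (n : ℕ) (hn : 0 < n) :
    ∫ t in (0:ℝ)..1, t ^ (n-1) * (1-t) ^ n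
      = ((n-1).factorial * n.factorial : ℝ) / (2*n).factorial := by
  have hu : 0 < Complex.re (n : ℂ) := by simpa using hn
  have hb := Complex.betaIntegral_eval_nat_add_one_right hu n
  rw [Complex.betaIntegral] at hb
  have hint : ∀ x : ℝ, (x:ℂ) ^ ((n:ℂ) - 1) * (1 - (x:ℂ)) ^ ((n:ℂ) + 1 - 1)
      = ((x ^ (n-1) * (1-x) ^ n : ℝ) : ℂ) := by
    intro x
    have h1 : (n:ℂ) - 1 = ((n - 1 : ℕ) : ℂ) := by
      push_cast [Nat.cast_sub hn] ; ring
    rw [h1, add_sub_cancel_right, Complex.cpow_natCast, Complex.cpow_natCast]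
    push_cast; ring
  simp_rw [hint, intervalIntegral.integral_ofReal,
    prod_range_nat_cast n (n+1)] at hb
  have hkey : (n-1).factorial * n.ascFactorial (n+1) = (2*n).factorial := by
    have := Nat.factorial_mul_ascFactorial' n (n+1) hn
    rwa [show n + (n+1) - 1 = 2*n by omega] at this
  have hr : ∫ t in (0:ℝ)..1, t ^ (n-1) * (1-t) ^ n
      = (n.factorial : ℝ) / (n.ascFactorial (n+1)) := by
    rw [show ((n.factorial:ℕ):ℂ) / ((n.ascFactorial (n+1):ℕ):ℂ)
        = (((n.factorial : ℝ) / (n.ascFactorial (n+1) : ℝ) : ℝ) : ℂ) by push_cast; ring] at hb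
    exact Complex.ofReal_inj.mp hb
  rw [hr, ← hkey]
  have h1 : ((n-1).factorial : ℝ) ≠ 0 := by positivity
  have h2 : ((n.ascFactorial (n+1) : ℕ) : ℝ) ≠ 0 := by
    have hp : 0 < n.ascFactorial (n+1) := by
      rcases Nat.exists_eq_add_of_lt hn with ⟨m, rfl⟩
      simpa using Nat.ascFactorial_pos m (m+1+1)
    positivity
  push_cast
  field_simp

theorem rogers_shephard (n : ℕ) (hn : 0 < n)
    (K : Set (EuclideanSpace ℝ (Fin n)))
    (hKc : IsCompact K) (hKconv : Convex ℝ K) (hKint : (interior K).Nonempty) :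
    volume (K - K) ≤ (Nat.choose (2 * n) n : ℝ≥0∞) * volume K := by
  classical
  obtain ⟨x₀, hx₀⟩ := hKint
  have hx₀K : x₀ ∈ K := interior_subset hx₀
  have hKm : MeasurableSet K := hKc.measurableSet
  haveI : Nonempty (Fin n) := ⟨⟨0, hn⟩⟩
  set D : Set (EuclideanSpace ℝ (Fin n)) := K - K with hDdef
  have hDc : IsCompact D := by
    rw [hDdef, sub_eq_add_neg]; exact hKc.add hKc.neg
  have hDconv : Convex ℝ D := hKconv.sub hKconv
  have hD0 : D ∈ 𝓝 (0 : EuclideanSpace ℝ (Fin n)) := by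
    have h1 : IsOpen ((-x₀) +ᵥ interior K) := isOpen_interior.vadd _
    have h2 : (0 : EuclideanSpace ℝ (Fin n)) ∈ (-x₀) +ᵥ interior K :=
      ⟨x₀, hx₀, by simp⟩
    have h3 : (-x₀) +ᵥ interior K ⊆ D := by
      rintro _ ⟨y, hy, rfl⟩
      exact ⟨y, interior_subset hy, x₀, hx₀K, by
        simp [vadd_eq_add]; abel⟩
    exact Filter.mem_of_superset (h1.mem_nhds h2) h3
  set g : EuclideanSpace ℝ (Fin n) → ℝ := gauge D with hgdef
  have hgc : Continuous g := continuous_gauge hDconv hD0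
  have hmem_iff : ∀ x, g x ≤ 1 ↔ x ∈ D := fun x => by
    rw [hgdef, gauge_le_one_iff_mem_closure hDconv hD0, hDc.isClosed.closure_eq]
  have hfr : Module.finrank ℝ (EuclideanSpace ℝ (Fin n)) = n := finrank_euclideanSpace_fin
  -- the set {g ≤ s} and its measure
  have hset : ∀ s : ℝ, 0 < s → {x | g x ≤ s} = s • D := by
    intro s hs
    ext x
    rw [mem_smul_set_iff_inv_smul_mem₀ hs.ne', ← hmem_iff, hgdef,
      gauge_smul_of_nonneg (inv_nonneg.mpr hs.le), smul_eq_mul, mem_setOf_eq,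
      inv_mul_le_iff₀ hs, mul_one]
  have hmeas_le : ∀ s : ℝ, 0 < s →
      volume {x | g x ≤ s} = ENNReal.ofReal (s^n) * volume D := by
    intro s hs
    rw [hset s hs, Measure.addHaar_smul, hfr, abs_of_nonneg (pow_nonneg hs.le n)]
  have hgzero : ∀ x, g x = 0 → x = 0 := by
    intro x hx
    exact (gauge_eq_zero (absorbent_nhds_zero hD0)
      (NormedSpace.isVonNBounded_of_isBounded _ hDc.isBounded)).mp hx
  -- lower bound on intersection volume
  have lower : ∀ x, ENNReal.ofReal (1 - g x) ^ n * volume K ≤ volume (K ∩ (x +ᵥ K)) := by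
    intro x
    rcases le_or_gt 1 (g x) with h1 | h1
    · rw [ENNReal.ofReal_of_nonpos (by linarith), zero_pow hn.ne', zero_mul]
      exact zero_le
    have hnn : (0:ℝ) ≤ g x := gauge_nonneg x
    rcases eq_or_lt_of_le hnn with h0 | h0
    · have hx0 : x = 0 := hgzero x h0.symm
      subst hx0
      rw [← h0, sub_zero, ENNReal.ofReal_one, one_pow, one_mul, zero_vadd, inter_self]
    set l : ℝ := g x with hl
    have hz : g (l⁻¹ • x) = 1 := by
      rw [hgdef, gauge_smul_of_nonneg (inv_nonneg.mpr h0.le), smul_eq_mul,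
        inv_mul_cancel₀ h0.ne']
    have hzD : l⁻¹ • x ∈ D := (hmem_iff _).mp hz.le
    obtain ⟨a, ha, b, hb, hab⟩ := hzD
    have hx : x = l • a - l • b := by
      have h := congrArg (fun v => l • v) hab
      simp only [smul_inv_smul₀ h0.ne'] at h
      rw [← h, smul_sub]
    have hT1 : (l • a) +ᵥ ((1 - l) • K) ⊆ K := by
      rintro _ ⟨_, ⟨y, hy, rfl⟩, rfl⟩
      exact hKconv ha hy h0.le (by linarith) (by ring)
    have hT2 : (l • a) +ᵥ ((1 - l) • K) ⊆ x +ᵥ K := by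
      rintro _ ⟨_, ⟨y, hy, rfl⟩, rfl⟩
      refine ⟨l • b + (1 - l) • y, hKconv hb hy h0.le (by linarith) (by ring), ?_⟩
      rw [hx]
      simp [vadd_eq_add]
      abel
    have hTm : volume ((l • a) +ᵥ ((1 - l) • K)) = ENNReal.ofReal (1 - g x) ^ n * volume K := by
      rw [measure_vadd, Measure.addHaar_smul, hfr,
        abs_of_nonneg (pow_nonneg (by linarith) n), ← hl,
        ENNReal.ofReal_pow (by linarith)]
    rw [← hTm]
    exact measure_mono (subset_inter hT1 hT2)
  -- Fubini
  have hvol_eq : ∀ x, volume (K ∩ (x +ᵥ K))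
      = ∫⁻ y, K.indicator 1 y * K.indicator 1 (y - x) := by
    intro x
    have hiff : ∀ y : EuclideanSpace ℝ (Fin n), y ∈ x +ᵥ K ↔ y - x ∈ K := by
      intro y
      rw [Set.mem_vadd_set_iff_neg_vadd_mem, vadd_eq_add, neg_add_eq_sub]
    rw [← lintegral_indicator_one (hKm.inter (hKm.const_vadd x))]
    refine lintegral_congr fun y => ?_
    by_cases h1 : y ∈ K <;> by_cases h2 : y - x ∈ K <;>
      simp [indicator_apply, h1, h2, hiff y, mem_inter_iff]
  have ind_meas : Measurable (K.indicator (1 : EuclideanSpace ℝ (Fin n) → ℝ≥0∞)) :=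
    measurable_one.indicator hKm
  have fub : ∫⁻ x : EuclideanSpace ℝ (Fin n), volume (K ∩ (x +ᵥ K)) = volume K * volume K := by
    simp_rw [hvol_eq]
    rw [lintegral_lintegral_swap]
    · have inner : ∀ y : EuclideanSpace ℝ (Fin n),
          ∫⁻ x, K.indicator 1 (y - x) = volume K := by
        intro y
        have h := lintegral_map_equiv (μ := volume)
          (K.indicator (1 : EuclideanSpace ℝ (Fin n) → ℝ≥0∞)) (MeasurableEquiv.subLeft y)
        have hco : ⇑(MeasurableEquiv.subLeft y) = fun t : EuclideanSpace ℝ (Fin n) => y - t := rfl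
        rw [hco, Measure.map_sub_left_eq_self volume y] at h
        rw [← h, lintegral_indicator_one hKm]
      calc ∫⁻ y, ∫⁻ x, K.indicator 1 y * K.indicator 1 (y - x)
          = ∫⁻ y, K.indicator 1 y * volume K := by
            refine lintegral_congr fun y => ?_
            have m1 : Measurable fun x : EuclideanSpace ℝ (Fin n) =>
                K.indicator (1 : EuclideanSpace ℝ (Fin n) → ℝ≥0∞) (y - x) :=
              ind_meas.comp (measurable_const.sub measurable_id)
            rw [lintegral_const_mul _ m1, inner y]
        _ = volume K * volume K := by
            rw [lintegral_mul_const _ ind_meas, lintegral_indicator_one hKm]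
    · exact ((ind_meas.comp measurable_snd).mul
        (ind_meas.comp (measurable_snd.sub measurable_fst))).aemeasurable
  -- Layer cake
  have hofmax : ∀ a : ℝ, ENNReal.ofReal (max a 0) = ENNReal.ofReal a := by
    intro a
    rcases le_total a 0 with h | h
    · rw [max_eq_right h, ENNReal.ofReal_zero, ENNReal.ofReal_of_nonpos h]
    · rw [max_eq_left h]
  have layer : ∫⁻ x, ENNReal.ofReal (1 - g x) ^ n
      = volume D * ENNReal.ofReal (n.factorial * n.factorial / (2*n).factorial) := by
    set f : EuclideanSpace ℝ (Fin n) → ℝ := fun x => max (1 - g x) 0 with hfdef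
    have f_nn : 0 ≤ᵐ[volume] f := Filter.Eventually.of_forall fun x => le_max_right _ _
    have f_mble : AEMeasurable f volume :=
      ((continuous_const.sub hgc).max continuous_const).measurable.aemeasurable
    have g_intble : ∀ t > (0:ℝ), IntervalIntegrable (fun t : ℝ => (n:ℝ) * t^(n-1)) volume 0 t :=
      fun t _ => (continuous_const.mul (continuous_pow _)).intervalIntegrable 0 t
    have g_nn : ∀ᵐ t ∂(volume.restrict (Ioi (0:ℝ))), 0 ≤ (n:ℝ) * t^(n-1) := by
      filter_upwards [ae_restrict_mem measurableSet_Ioi] with t ht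
      have : (0:ℝ) < t := ht
      positivity
    have key := lintegral_comp_eq_lintegral_meas_le_mul volume f_nn f_mble g_intble g_nn
    have lhs_eq : ∀ x, ENNReal.ofReal (∫ t in (0:ℝ)..f x, (n : ℝ) * t^(n-1))
        = ENNReal.ofReal (1 - g x) ^ n := by
      intro x
      rw [intervalIntegral.integral_const_mul, integral_pow]
      have hn1 : n - 1 + 1 = n := Nat.succ_pred_eq_of_pos hn
      have hc : ((n-1:ℕ):ℝ) + 1 = (n:ℝ) := by exact_mod_cast hn1
      rw [hn1, hc, zero_pow hn.ne', sub_zero]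
      rw [show (n:ℝ) * (f x ^ n / n) = f x ^ n by
        field_simp]
      rw [ENNReal.ofReal_pow (le_max_right _ _), hofmax]
    have rhs_eq : ∀ t ∈ Ioi (0:ℝ), volume {a | t ≤ f a} * ENNReal.ofReal ((n:ℝ) * t^(n-1))
        = volume D * (ENNReal.ofReal (max (1-t) 0 ^ n * ((n:ℝ) * t^(n-1)))) := by
      intro t ht
      have ht' : (0:ℝ) < t := ht
      have hmeas : volume {a | t ≤ f a} = ENNReal.ofReal (max (1-t) 0 ^ n) * volume D := by
        rcases lt_or_ge t 1 with h | h
        · have hs : {a | t ≤ f a} = {a | g a ≤ 1 - t} := by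
            ext a
            simp only [hfdef, mem_setOf_eq, le_max_iff]
            constructor
            · rintro (h' | h')
              · linarith
              · linarith
            · intro h'; left; linarith
          rw [hs, hmeas_le (1-t) (by linarith), max_eq_left (by linarith)]
        · have hs : {a | t ≤ f a} ⊆ {(0 : EuclideanSpace ℝ (Fin n))} := by
            intro a hafa
            simp only [hfdef, mem_setOf_eq, le_max_iff] at hafa
            have hga : g a ≤ 0 := by
              rcases hafa with h' | h'
              · linarith
              · linarith
            have : g a = 0 := le_antisymm hga (gauge_nonneg a)
            simp [hgzero a this]
          have h0 : volume {a | t ≤ f a} = 0 :=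
            le_antisymm (le_trans (measure_mono hs) (by simp)) zero_le
          rw [h0, max_eq_right (by linarith), zero_pow hn.ne', ENNReal.ofReal_zero, zero_mul]
      rw [hmeas, ENNReal.ofReal_mul (pow_nonneg (le_max_right (1-t) 0) n)]
      ring
    rw [lintegral_congr lhs_eq] at key
    rw [key, setLIntegral_congr_fun measurableSet_Ioi
      rhs_eq]
    rw [lintegral_const_mul' _ _ hDc.measure_lt_top.ne]
    congr 1
    -- ∫⁻ t in Ioi 0, ofReal (max (1-t) 0 ^ n * (n * t^(n-1))) = ofReal (n! n! / (2n)!)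
    have hsplit : Ioi (0:ℝ) = Ioc (0:ℝ) 1 ∪ Ioi (1:ℝ) := (Ioc_union_Ioi_eq_Ioi zero_le_one).symm
    rw [hsplit, lintegral_union measurableSet_Ioi (Ioc_disjoint_Ioi le_rfl)]
    have hzero : ∫⁻ t in Ioi (1:ℝ), ENNReal.ofReal (max (1-t) 0 ^ n * ((n:ℝ) * t^(n-1))) = 0 := by
      rw [setLIntegral_congr_fun measurableSet_Ioi (
        (fun t (ht : t ∈ Ioi (1:ℝ)) => by
          rw [max_eq_right (by simp only [mem_Ioi] at ht; linarith), zero_pow hn.ne',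
            zero_mul, ENNReal.ofReal_zero]))]
      simp
    rw [hzero, add_zero]
    have hcong : ∫⁻ t in Ioc (0:ℝ) 1, ENNReal.ofReal (max (1-t) 0 ^ n * ((n:ℝ) * t^(n-1)))
        = ∫⁻ t in Ioc (0:ℝ) 1, ENNReal.ofReal ((1-t) ^ n * ((n:ℝ) * t^(n-1))) := by
      refine setLIntegral_congr_fun measurableSet_Ioc (
        (fun t (ht : t ∈ Ioc (0:ℝ) 1) => ?_))
      rw [max_eq_left (by rcases ht with ⟨h1, h2⟩; linarith)]
    rw [hcong]
    rw [← ofReal_integral_eq_lintegral_ofReal]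
    · congr 1
      rw [← intervalIntegral.integral_of_le zero_le_one]
      have : ∀ t : ℝ, (1-t) ^ n * ((n:ℝ) * t^(n-1)) = (n:ℝ) * (t^(n-1) * (1-t)^n) := by
        intro t; ring
      simp_rw [this]
      rw [intervalIntegral.integral_const_mul, beta_nat n hn]
      have hfac : (n : ℝ) * (n-1).factorial = n.factorial := by
        exact_mod_cast Nat.mul_factorial_pred hn.ne'
      rw [← mul_div_assoc, ← mul_assoc, hfac]
    · exact ((((continuous_const.sub continuous_id).pow n).mul
        (continuous_const.mul (continuous_pow _))).integrableOn_Ioc)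
    · filter_upwards [ae_restrict_mem measurableSet_Ioc] with t ht
      rcases ht with ⟨h1, h2⟩
      have h3 : (0:ℝ) ≤ 1 - t := by linarith
      positivity
  -- combine
  have hmuK0 : volume K ≠ 0 := (Measure.measure_pos_of_nonempty_interior _ ⟨x₀, hx₀⟩).ne'
  have hmuKt : volume K ≠ ⊤ := hKc.measure_lt_top.ne
  have hmble : Measurable fun x : EuclideanSpace ℝ (Fin n) => ENNReal.ofReal (1 - g x) ^ n :=
    (ENNReal.measurable_ofReal.comp (continuous_const.sub hgc).measurable).pow_const n
  have step : (∫⁻ x : EuclideanSpace ℝ (Fin n), ENNReal.ofReal (1 - g x) ^ n) * volume K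
      ≤ volume K * volume K := by
    rw [← fub, ← lintegral_mul_const _ hmble]
    exact lintegral_mono lower
  rw [layer] at step
  have step2 : volume D * ENNReal.ofReal (n.factorial * n.factorial / (2*n).factorial)
      ≤ volume K := by
    rw [mul_comm _ (volume K)] at step
    exact (ENNReal.mul_le_mul_iff_right hmuK0 hmuKt).mp step
  have hC : ((2*n).choose n : ℝ≥0∞)
      * ENNReal.ofReal (n.factorial * n.factorial / (2*n).factorial) = 1 := by
    rw [← ENNReal.ofReal_natCast, ← ENNReal.ofReal_mul (by positivity)]
    have hkey : (2*n).choose n * (n.factorial * n.factorial) = (2*n).factorial := by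
      have h := Nat.choose_mul_factorial_mul_factorial (show n ≤ 2*n by omega)
      rw [show 2*n - n = n by omega] at h
      rw [← h]; ring
    have h2 : ((2*n).factorial : ℝ) ≠ 0 := by positivity
    rw [show ((2*n).choose n : ℝ) * (n.factorial * n.factorial / (2*n).factorial) = 1 by
      field_simp; rw [sq]; exact_mod_cast hkey]
    exact ENNReal.ofReal_one
  calc volume D
      = volume D * (ENNReal.ofReal (n.factorial * n.factorial / (2*n).factorial)
          * ((2*n).choose n : ℝ≥0∞)) := by
        rw [mul_comm (ENNReal.ofReal _) _, hC, mul_one]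
    _ = (volume D * ENNReal.ofReal (n.factorial * n.factorial / (2*n).factorial))
          * ((2*n).choose n : ℝ≥0∞) := by ring
    _ ≤ volume K * ((2*n).choose n : ℝ≥0∞) := mul_le_mul_left step2 _
    _ = ((2*n).choose n : ℝ≥0∞) * volume K := mul_comm _ _
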